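/- Under Assumptions A, with p_n^# := Σ_{m ≥ 0} p_n(m), the limit log μ := lim_{n→∞} (1/n)·log p_n^# exists and is a finite real number. -/

import Mathlib

open Filter Set

/-- Under Assumptions A, with `p_n^# = Σ_{m ≥ 0} p n m` (a finite sum, since
`p n m = 0` for `m > B n`), the limit `log μ = lim (1/n)·log p_n^#` exists
and is a finite real number. -/
theorem growth_constant_exists
    (p : ℕ → ℕ → ℕ) (A B : ℕ → ℕ) (K C : ℝ)
    (hK : 0 < K) (hpK : ∀ n, 1 ≤ n → ∀ m, (p n m : ℝ) ≤ K ^ n)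
    (hC : 0 < C)
    (hABle : ∀ n, 1 ≤ n → A n ≤ B n)
    (hBC : ∀ n, 1 ≤ n → (B n : ℝ) ≤ C * n)
    (hpos : ∀ n, 1 ≤ n → ∀ m, A n ≤ m → m ≤ B n → 0 < p n m)
    (hzero : ∀ n, 1 ≤ n → ∀ m, (m < A n ∨ B n < m) → p n m = 0)
    (hsuper : ∀ n₁ n₂, 1 ≤ n₁ → 1 ≤ n₂ → ∀ m₁ m₂,
      p n₁ m₁ * p n₂ m₂ ≤ p (n₁ + n₂) (m₁ + m₂)) :
    ∃ logμ : ℝ,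
      Tendsto (fun n : ℕ =>
          Real.log (∑ m ∈ Finset.range (B n + 1), p n m) / n)
        atTop (nhds logμ) := by
  classical
  set q : ℕ → ℕ := fun n => if n = 0 then 1 else (Finset.range (B n + 1)).sup (p n) with hqdef
  have hq0 : q 0 = 1 := by simp [hqdef]
  have hexists : ∀ n, 1 ≤ n → ∃ k ∈ Finset.range (B n + 1), q n = p n k := by
    intro n hn
    obtain ⟨b, hb, hbe⟩ := Finset.exists_mem_eq_sup (Finset.range (B n + 1))
      ⟨0, Finset.mem_range.mpr (Nat.succ_pos _)⟩ (p n)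
    exact ⟨b, hb, by simp only [hqdef]; simp [Nat.one_le_iff_ne_zero.mp hn, hbe]⟩
  have hq1 : ∀ n, 1 ≤ q n := by
    intro n
    rcases Nat.eq_zero_or_pos n with h | hn
    · simp [h, hq0]
    · have hA : A n ∈ Finset.range (B n + 1) :=
        Finset.mem_range.mpr (Nat.lt_succ_of_le (hABle n hn))
      have h1 := Finset.le_sup (f := p n) hA
      have hp := hpos n hn (A n) le_rfl (hABle n hn)
      simp only [hqdef]
      simp only [Nat.one_le_iff_ne_zero.mp hn, if_false]
      omega
  have hple : ∀ n, 1 ≤ n → ∀ k, p n k ≤ q n := by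
    intro n hn k
    by_cases hk : k ≤ B n
    · have hmem : k ∈ Finset.range (B n + 1) := Finset.mem_range.mpr (Nat.lt_succ_of_le hk)
      have := Finset.le_sup (f := p n) hmem
      simp only [hqdef]
      simpa [Nat.one_le_iff_ne_zero.mp hn] using this
    · have : p n k = 0 := hzero n hn k (Or.inr (lt_of_not_ge hk))
      simp [this]
  have hsup : ∀ m n, q m * q n ≤ q (m + n) := by
    intro m n
    rcases Nat.eq_zero_or_pos m with hm | hm
    · subst hm; simp [hq0]
    rcases Nat.eq_zero_or_pos n with hn | hn
    · subst hn; simp [hq0]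
    obtain ⟨k1, _, hk1⟩ := hexists m hm
    obtain ⟨k2, _, hk2⟩ := hexists n hn
    calc q m * q n = p m k1 * p n k2 := by rw [hk1, hk2]
      _ ≤ p (m + n) (k1 + k2) := hsuper m n hm hn k1 k2
      _ ≤ q (m + n) := hple (m + n) (by omega) _
  have hqK : ∀ n, 1 ≤ n → (q n : ℝ) ≤ K ^ n := by
    intro n hn
    obtain ⟨k, _, hk⟩ := hexists n hn
    rw [hk]; exact hpK n hn k
  set u : ℕ → ℝ := fun n => -Real.log (q n) with hudef
  have husub : Subadditive u := by
    intro m n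
    have h1 : (0:ℝ) < q m := by exact_mod_cast hq1 m
    have h2 : (0:ℝ) < q n := by exact_mod_cast hq1 n
    have hmul : (q m : ℝ) * q n ≤ (q (m + n) : ℝ) := by exact_mod_cast hsup m n
    have : Real.log (q m) + Real.log (q n) ≤ Real.log (q (m + n)) := by
      rw [← Real.log_mul (ne_of_gt h1) (ne_of_gt h2)]
      exact Real.log_le_log (by positivity) hmul
    simp only [hudef]
    linarith
  have hbdd : BddBelow (Set.range fun n => u n / n) := by
    refine ⟨min (-Real.log K) 0, ?_⟩
    rintro x ⟨n, rfl⟩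
    rcases Nat.eq_zero_or_pos n with h | h
    · subst h; simp [hudef, hq0]
    · have hn' : (0:ℝ) < n := by exact_mod_cast h
      have h1 : (0:ℝ) < q n := by exact_mod_cast hq1 n
      have hlog : Real.log (q n) ≤ n * Real.log K := by
        calc Real.log (q n) ≤ Real.log (K ^ n) := Real.log_le_log h1 (hqK n h)
          _ = n * Real.log K := by rw [Real.log_pow]
      have : -Real.log K ≤ u n / n := by
        rw [le_div_iff₀ hn']
        simp only [hudef]
        nlinarith
      exact le_trans (min_le_left _ _) this
  have hlim := husub.tendsto_lim hbdd
  -- the sum and its comparison with q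
  set S : ℕ → ℕ := fun n => ∑ m ∈ Finset.range (B n + 1), p n m with hSdef
  have hqS : ∀ n, 1 ≤ n → q n ≤ S n := by
    intro n hn
    obtain ⟨k, hk, hke⟩ := hexists n hn
    rw [hke]
    exact Finset.single_le_sum (fun i _ => Nat.zero_le _) hk
  have hSq : ∀ n, 1 ≤ n → S n ≤ (B n + 1) * q n := by
    intro n hn
    have := Finset.sum_le_card_nsmul (Finset.range (B n + 1)) (p n) (q n)
      (fun x _ => hple n hn x)
    simpa [Finset.card_range, smul_eq_mul] using this
  -- the error term
  set e : ℕ → ℝ := fun n => (Real.log (S n) - Real.log (q n)) / n with hedef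
  have hCn : Tendsto (fun n : ℕ => Real.log (C * n + 1) / n) atTop (nhds 0) := by
    have hk : Tendsto (fun n : ℕ => C * (n : ℝ) + 1) atTop atTop :=
      tendsto_atTop_add_const_right _ 1 (tendsto_natCast_atTop_atTop.const_mul_atTop hC)
    have h1 : (fun n : ℕ => Real.log (C * n + 1)) =o[atTop] (fun n : ℕ => C * (n : ℝ) + 1) :=
      Real.isLittleO_log_id_atTop.comp_tendsto hk
    have h2 : (fun n : ℕ => C * (n : ℝ) + 1) =O[atTop] (fun n : ℕ => (n : ℝ)) := by
      rw [Asymptotics.isBigO_iff]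
      refine ⟨C + 1, ?_⟩
      filter_upwards [eventually_ge_atTop 1] with n hn
      have hn' : (1:ℝ) ≤ n := by exact_mod_cast hn
      rw [Real.norm_eq_abs, Real.norm_eq_abs, abs_of_nonneg (by positivity),
        abs_of_nonneg (by positivity)]
      nlinarith
    exact (h1.trans_isBigO h2).tendsto_div_nhds_zero
  have he : Tendsto e atTop (nhds 0) := by
    apply squeeze_zero' (g := fun n : ℕ => Real.log (C * n + 1) / n)
    · filter_upwards [eventually_ge_atTop 1] with n hn
      have h1 : (1:ℝ) ≤ q n := by exact_mod_cast hq1 n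
      have h2 : (q n : ℝ) ≤ S n := by exact_mod_cast hqS n hn
      have : Real.log (q n) ≤ Real.log (S n) := Real.log_le_log (by linarith) h2
      have hn' : (0:ℝ) < n := by exact_mod_cast hn
      simp only [hedef]
      apply div_nonneg (by linarith) (le_of_lt hn')
    · filter_upwards [eventually_ge_atTop 1] with n hn
      have h1 : (0:ℝ) < q n := by exact_mod_cast hq1 n
      have h2 : (0:ℝ) < S n := lt_of_lt_of_le h1 (by exact_mod_cast hqS n hn)
      have hBn : ((B n : ℝ) + 1) ≤ C * n + 1 := by
        have := hBC n hn
        linarith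
      have hlogS : Real.log (S n) ≤ Real.log ((B n : ℝ) + 1) + Real.log (q n) := by
        have hcast : (S n : ℝ) ≤ ((B n : ℝ) + 1) * q n := by
          have := hSq n hn
          push_cast
          exact_mod_cast this
        calc Real.log (S n) ≤ Real.log (((B n : ℝ) + 1) * q n) :=
              Real.log_le_log h2 hcast
          _ = Real.log ((B n : ℝ) + 1) + Real.log (q n) :=
              Real.log_mul (by positivity) (ne_of_gt h1)
      have hlogB : Real.log ((B n : ℝ) + 1) ≤ Real.log (C * n + 1) :=
        Real.log_le_log (by positivity) hBn
      have hn' : (0:ℝ) < n := by exact_mod_cast hn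
      simp only [hedef]
      gcongr
      linarith
    · exact hCn
  refine ⟨-husub.lim, ?_⟩
  have hfinal := hlim.neg.add he
  rw [add_zero] at hfinal
  refine hfinal.congr fun n => ?_
  simp only [hudef, hedef, hSdef]
  rw [neg_div, neg_neg, ← add_div]
  congr 1
  push_cast
  ring
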